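/- Let m be a positive integer and let v1v2v3v4 be the path P4 with lists L(v1), …, L(v4) each of size 7m. If P4 admits an (L, 4m)-coloring, then there exist m-element sets A_i ⊆ L(v_i) \ L(v_{i+1}) for i ∈ {1,2,3} and m-element sets B_j ⊆ L(v_j) \ L(v_{j-1}) for j ∈ {2,3,4} such that A_3 ∩ B_2 = ∅. -/

import Mathlib

lemma aux_17 (m : ℕ) {C C' L' : Finset ℕ} (hC : C.card = 4 * m)
    (hC'L' : C' ⊆ L') (hC' : C'.card = 4 * m) (hL' : L'.card = 7 * m)
    (hd : Disjoint C C') : m ≤ (C \ L').card := by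
  have h1 : C ∩ L' ⊆ L' \ C' := by
    intro x hx
    simp only [Finset.mem_inter] at hx
    simp only [Finset.mem_sdiff]
    exact ⟨hx.2, fun hxc' => (Finset.disjoint_left.mp hd hx.1) hxc'⟩
  have h2 : (L' \ C').card = 7 * m - 4 * m := by
    rw [Finset.card_sdiff_of_subset hC'L', hC', hL']
  have h3 : (C ∩ L').card ≤ 7 * m - 4 * m := h2 ▸ Finset.card_le_card h1
  have h4 : (C \ L').card + (C ∩ L').card = C.card :=
    Finset.card_sdiff_add_card_inter C L'
  omega

/-- For the path `P4 = v1v2v3v4` with lists of size `7m`: if it admits an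
`(L, 4m)`-coloring, then there exist `m`-sets `A_i ⊆ L(v_i) \ L(v_{i+1})` for
`i ∈ {1,2,3}` and `m`-sets `B_j ⊆ L(v_j) \ L(v_{j-1})` for `j ∈ {2,3,4}` with
`A_3 ∩ B_2 = ∅`. -/
theorem stmt_17 (m : ℕ) (hm : 0 < m) (L1 L2 L3 L4 : Finset ℕ)
    (hL1 : L1.card = 7 * m) (hL2 : L2.card = 7 * m) (hL3 : L3.card = 7 * m)
    (hL4 : L4.card = 7 * m)
    (hcol : ∃ C1 C2 C3 C4 : Finset ℕ, C1 ⊆ L1 ∧ C2 ⊆ L2 ∧ C3 ⊆ L3 ∧ C4 ⊆ L4 ∧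
      C1.card = 4 * m ∧ C2.card = 4 * m ∧ C3.card = 4 * m ∧ C4.card = 4 * m ∧
      Disjoint C1 C2 ∧ Disjoint C2 C3 ∧ Disjoint C3 C4) :
    ∃ A1 A2 A3 B2 B3 B4 : Finset ℕ,
      A1 ⊆ L1 \ L2 ∧ A1.card = m ∧
      A2 ⊆ L2 \ L3 ∧ A2.card = m ∧
      A3 ⊆ L3 \ L4 ∧ A3.card = m ∧
      B2 ⊆ L2 \ L1 ∧ B2.card = m ∧
      B3 ⊆ L3 \ L2 ∧ B3.card = m ∧
      B4 ⊆ L4 \ L3 ∧ B4.card = m ∧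
      A3 ∩ B2 = ∅ := by
  obtain ⟨C1, C2, C3, C4, h1, h2, h3, h4, c1, c2, c3, c4, d12, d23, d34⟩ := hcol
  obtain ⟨A1, hA1s, hA1c⟩ := Finset.exists_subset_card_eq (aux_17 m c1 h2 c2 hL2 d12)
  obtain ⟨A2, hA2s, hA2c⟩ := Finset.exists_subset_card_eq (aux_17 m c2 h3 c3 hL3 d23)
  obtain ⟨A3, hA3s, hA3c⟩ := Finset.exists_subset_card_eq (aux_17 m c3 h4 c4 hL4 d34)
  obtain ⟨B2, hB2s, hB2c⟩ := Finset.exists_subset_card_eq (aux_17 m c2 h1 c1 hL1 d12.symm)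
  obtain ⟨B3, hB3s, hB3c⟩ := Finset.exists_subset_card_eq (aux_17 m c3 h2 c2 hL2 d23.symm)
  obtain ⟨B4, hB4s, hB4c⟩ := Finset.exists_subset_card_eq (aux_17 m c4 h3 c3 hL3 d34.symm)
  refine ⟨A1, A2, A3, B2, B3, B4, ?_, hA1c, ?_, hA2c, ?_, hA3c, ?_, hB2c, ?_, hB3c, ?_, hB4c, ?_⟩
  · exact hA1s.trans (Finset.sdiff_subset_sdiff h1 le_rfl)
  · exact hA2s.trans (Finset.sdiff_subset_sdiff h2 le_rfl)
  · exact hA3s.trans (Finset.sdiff_subset_sdiff h3 le_rfl)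
  · exact hB2s.trans (Finset.sdiff_subset_sdiff h2 le_rfl)
  · exact hB3s.trans (Finset.sdiff_subset_sdiff h3 le_rfl)
  · exact hB4s.trans (Finset.sdiff_subset_sdiff h4 le_rfl)
  · have : Disjoint A3 B2 :=
      d23.symm.mono (hA3s.trans Finset.sdiff_subset) (hB2s.trans Finset.sdiff_subset)
    exact Finset.disjoint_iff_inter_eq_empty.mp this
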